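/- Let I be an instance of 3DM with elements A ∪ B ∪ C = {e_1,…,e_{3n̂}} and family S = {S_1,…,S_{3n̂}}. Construct the capacitated house allocation instance I' as follows: for each element e_i there is a house e_i of capacity 1 and an applicant e_i' with preference list consisting of e_i only; for each set S_j = {e_{j_1}, e_{j_2}, e_{j_3}} (j_1 < j_2 < j_3) there are houses t_j of capacity 4, p_j of capacity 2, q_j of capacity 1, and applicants s_j^1, s_j^2, s_j^3, s_j^4, a_j, p_j', q_j^1, q_j^2 with preference lists s_j^ℓ : e_{j_ℓ} ≻ p_j ≻ t_j for ℓ = 1,2,3; s_j^4 : e_{j_3} ≻ p_j ≻ t_j; a_j : q_j ≻ p_j ≻ x; q_j^1, q_j^2 : q_j only; p_j' : p_j only; and there is a collector house x of capacity 2n̂ − 1. Then there is a capacity change vector r with |r|_∞ ≤ 1 such that the instance with capacities q + r admits a perfect popular matching if and only if I admits an exact 3-cover. -/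

import Mathlib

noncomputable section

open Finset

attribute [local instance] Classical.propDecidable

/-- `Better l x y` means the (optional) house `x` is strictly preferred to the (optional)
house `y` according to the strict preference list `l` (earlier in the list = more
preferred); being matched to any acceptable house is preferred to being unmatched. -/
def Better {H : Type*} (l : List H) : Option H → Option H → Prop
  | some h, some h' => h ∈ l ∧ l.idxOf h < l.idxOf h'
  | some h, none => h ∈ l
  | none, _ => False

/-- A capacitated house allocation instance: each applicant `a` has a strict preference
list `pref a` over her acceptable houses (most preferred first, acceptable = on the list),
and each house `h` has a capacity `cap h`. -/
structure HA (A H : Type*) where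
  pref : A → List H
  cap : H → ℕ

namespace HA

variable {A H : Type*} [Fintype A]

/-- A matching assigns to each applicant at most one acceptable house,
respecting the houses' capacities. -/
def IsMatching (I : HA A H) (M : A → Option H) : Prop :=
  (∀ a h, M a = some h → h ∈ I.pref a) ∧
  ∀ h, (univ.filter fun a => M a = some h).card ≤ I.cap h

/-- A matching is perfect if every applicant is matched. -/
def Perfect (M : A → Option H) : Prop := ∀ a, (M a).isSome

/-- `M'` dominates `M` if strictly more applicants prefer `M'` to `M` than
prefer `M` to `M'`. -/
def Dominates (I : HA A H) (M' M : A → Option H) : Prop :=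
  (univ.filter fun a => Better (I.pref a) (M a) (M' a)).card <
    (univ.filter fun a => Better (I.pref a) (M' a) (M a)).card

/-- A matching is popular if no matching dominates it. -/
def Popular (I : HA A H) (M : A → Option H) : Prop :=
  I.IsMatching M ∧ ∀ M', I.IsMatching M' → ¬ I.Dominates M' M

/-- `M'` Pareto-dominates `M` if every applicant is at least as well off in `M'`,
and some applicant is strictly better off. -/
def ParetoDominates (I : HA A H) (M' M : A → Option H) : Prop :=
  (∀ a, M' a = M a ∨ Better (I.pref a) (M' a) (M a)) ∧
  ∃ a, Better (I.pref a) (M' a) (M a)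

/-- A matching is Pareto-optimal if no matching Pareto-dominates it. -/
def ParetoOptimal (I : HA A H) (M : A → Option H) : Prop :=
  I.IsMatching M ∧ ∀ M', I.IsMatching M' → ¬ I.ParetoDominates M' M

/-- The cardinality of a matching: the number of matched applicants. -/
def size (M : A → Option H) : ℕ := (univ.filter fun a => (M a).isSome).card

/-- `f(a)`: the most preferred acceptable house of `a` (if any). -/
def fOpt (I : HA A H) (a : A) : Option H := (I.pref a).head?

/-- The admirers of a house `h`: the applicants whose most preferred house is `h`. -/
def admirers (I : HA A H) (h : H) : Finset A := univ.filter fun a => I.fOpt a = some h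

/-- `s(a)`: equals `f(a)` if `f(a)` has at most `cap (f a)` admirers; otherwise the
most preferred acceptable house of `a` having strictly fewer admirers than its
capacity; `none` if no such house exists. -/
def sOpt (I : HA A H) (a : A) : Option H :=
  match (I.pref a).head? with
  | none => none
  | some h =>
    if (I.admirers h).card ≤ I.cap h then some h
    else (I.pref a).find? fun h' => decide ((I.admirers h').card < I.cap h')

/-- `(a, h)` is an edge of the first/second-choice multigraph `G'`. -/
def InG' (I : HA A H) (a : A) (h : H) : Prop := I.fOpt a = some h ∨ I.sOpt a = some h

/-- The set of applicants matched to house `h` in `M`. -/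
def matchedTo (M : A → Option H) (h : H) : Finset A := univ.filter fun a => M a = some h

/-- An admissible matching: every edge lies in `G'`; every house having at least as many
admirers as its capacity is saturated by admirers only; and every house having at most
as many admirers as its capacity has all its admirers matched to it. -/
def Admissible (I : HA A H) (M : A → Option H) : Prop :=
  I.IsMatching M ∧
  (∀ a h, M a = some h → I.InG' a h) ∧
  (∀ h, I.cap h ≤ (I.admirers h).card →
      (matchedTo M h).card = I.cap h ∧ ∀ a ∈ matchedTo M h, I.fOpt a = some h) ∧
  (∀ h, (I.admirers h).card ≤ I.cap h → ∀ a ∈ I.admirers h, M a = some h)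

end HA

/-- An instance of the special variant of 3DM used in the reductions: the elements are
`e_0, …, e_{3n̂-1} : Fin (3 * n̂)`, where the first `n̂` elements form the class `A`, the
next `n̂` form `B` and the last `n̂` form `C`; `S j = (j₁, j₂, j₃)` (with `j₁ < j₂ < j₃`,
one element from each class) is the `j`-th 3-set of the family, and every element lies
in exactly 3 members of the family. -/
structure ThreeDMFlat (n : ℕ) where
  S : Fin (3 * n) → Fin (3 * n) × Fin (3 * n) × Fin (3 * n)
  partA : ∀ j, ((S j).1 : ℕ) < n
  partB : ∀ j, n ≤ ((S j).2.1 : ℕ) ∧ ((S j).2.1 : ℕ) < 2 * n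
  partC : ∀ j, 2 * n ≤ ((S j).2.2 : ℕ)
  reg : ∀ i, (Finset.univ.filter fun j =>
    (S j).1 = i ∨ (S j).2.1 = i ∨ (S j).2.2 = i).card = 3

/-- Membership of element `i` in the set `S j`. -/
def ThreeDMFlat.Mem {n : ℕ} (D : ThreeDMFlat n) (i j : Fin (3 * n)) : Prop :=
  (D.S j).1 = i ∨ (D.S j).2.1 = i ∨ (D.S j).2.2 = i

/-- `J` is an exact 3-cover: every element lies in exactly one member of `J`. -/
def ThreeDMFlat.ExactCover {n : ℕ} (D : ThreeDMFlat n) (J : Finset (Fin (3 * n))) : Prop :=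
  ∀ i, (J.filter fun j => D.Mem i j).card = 1

/-- Houses of the reduction for STATEMENT 14: element houses `e_i`, houses `t_j`, `p_j`,
`q_j` for each set `S_j`, and the collector house `x`. -/
abbrev House14 (n : ℕ) :=
  Fin (3 * n) ⊕ (Fin (3 * n) ⊕ (Fin (3 * n) ⊕ (Fin (3 * n) ⊕ Unit)))

/-- Applicants of the reduction for STATEMENT 14: `e_i'`, `s_j^ℓ` (ℓ = 1,2,3,4), `a_j`,
`p_j'` and `q_j^1, q_j^2`. -/
abbrev Appl14 (n : ℕ) :=
  Fin (3 * n) ⊕ ((Fin (3 * n) × Fin 4) ⊕ (Fin (3 * n) ⊕ (Fin (3 * n) ⊕ (Fin (3 * n) × Fin 2))))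

def he14 {n : ℕ} (i : Fin (3 * n)) : House14 n := Sum.inl i
def ht14 {n : ℕ} (j : Fin (3 * n)) : House14 n := Sum.inr (Sum.inl j)
def hp14 {n : ℕ} (j : Fin (3 * n)) : House14 n := Sum.inr (Sum.inr (Sum.inl j))
def hq14 {n : ℕ} (j : Fin (3 * n)) : House14 n := Sum.inr (Sum.inr (Sum.inr (Sum.inl j)))
def hx14 {n : ℕ} : House14 n := Sum.inr (Sum.inr (Sum.inr (Sum.inr ())))

/-- The element of `S_j` acceptable to `s_j^ℓ`: `e_{j_1}, e_{j_2}, e_{j_3}` for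
`ℓ = 0, 1, 2` and `e_{j_3}` for `ℓ = 3`. -/
def elem14 {n : ℕ} (D : ThreeDMFlat n) (j : Fin (3 * n)) (ℓ : Fin 4) : Fin (3 * n) :=
  if ℓ = 0 then (D.S j).1 else if ℓ = 1 then (D.S j).2.1 else (D.S j).2.2

/-- Initial capacities: `q[e_i] = 1`, `q[t_j] = 4`, `q[p_j] = 2`, `q[q_j] = 1`,
`q[x] = 2n̂ - 1`. -/
def cap14 {n : ℕ} : House14 n → ℕ
  | Sum.inl _ => 1
  | Sum.inr (Sum.inl _) => 4
  | Sum.inr (Sum.inr (Sum.inl _)) => 2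
  | Sum.inr (Sum.inr (Sum.inr (Sum.inl _))) => 1
  | Sum.inr (Sum.inr (Sum.inr (Sum.inr _))) => 2 * n - 1

/-- The instance `I'` of STATEMENT 14 (with capacity vector `c`):
`s_j^ℓ : e_{j_ℓ} ≻ p_j ≻ t_j` (ℓ = 1,2,3), `s_j^4 : e_{j_3} ≻ p_j ≻ t_j`;
`a_j : q_j ≻ p_j ≻ x`; `q_j^1, q_j^2 : q_j`; `p_j' : p_j`; `e_i' : e_i`. -/
def inst14 {n : ℕ} (D : ThreeDMFlat n) (c : House14 n → ℕ) : HA (Appl14 n) (House14 n) where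
  pref := fun a =>
    match a with
    | Sum.inl i => [he14 i]
    | Sum.inr (Sum.inl (j, ℓ)) => [he14 (elem14 D j ℓ), hp14 j, ht14 j]
    | Sum.inr (Sum.inr (Sum.inl j)) => [hq14 j, hp14 j, hx14]
    | Sum.inr (Sum.inr (Sum.inr (Sum.inl j))) => [hp14 j]
    | Sum.inr (Sum.inr (Sum.inr (Sum.inr (j, _)))) => [hq14 j]
  cap := c

/-! ### Auxiliary general lemmas -/

lemma Better.irrefl {H : Type*} (l : List H) (o : Option H) : ¬ Better l o o := by
  cases o with
  | none => simp [Better]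
  | some h => simp [Better]

lemma Better.some_of {H : Type*} {l : List H} {o o' : Option H} (h : Better l o o') :
    ∃ x, o = some x := by
  cases o with
  | none => exact absurd h (by simp [Better])
  | some x => exact ⟨x, rfl⟩

lemma Better.ne {H : Type*} {l : List H} {x : H} {o : Option H}
    (h : Better l (some x) o) : o ≠ some x := by
  rintro rfl
  simp [Better] at h

lemma better_some_some {H : Type*} {l : List H} {x y : H} :
    Better l (some x) (some y) ↔ x ∈ l ∧ l.idxOf x < l.idxOf y := Iff.rfl

lemma better_some_none {H : Type*} {l : List H} {x : H} :
    Better l (some x) none ↔ x ∈ l := Iff.rfl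

/-- A head element beats any other element of any option value. -/
lemma better_head {H : Type*} {t : List H} {x : H} {o : Option H}
    (ho : o ≠ some x) (hmem : ∀ y, o = some y → y ∈ x :: t) :
    Better (x :: t) (some x) o := by
  cases o with
  | none => exact List.mem_cons_self
  | some y =>
    have hxy : y ≠ x := fun h => ho (by rw [h])
    refine ⟨List.mem_cons_self, ?_⟩
    rw [List.idxOf_cons_self, List.idxOf_cons_ne _ (Ne.symm hxy)]
    exact Nat.succ_pos _

/-- Nothing is better than the head of the preference list. -/
lemma not_better_head {H : Type*} {t : List H} {x : H} {o : Option H} :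
    ¬ Better (x :: t) o (some x) := by
  cases o with
  | none => simp [Better]
  | some y =>
    rintro ⟨hy, hlt⟩
    rw [List.idxOf_cons_self] at hlt
    omega

lemma find?_earlier {α : Type*} {p : α → Bool} :
    ∀ {l : List α} {b : α}, l.find? p = some b → ∀ a ∈ l, l.idxOf a < l.idxOf b →
      p a = false := by
  intro l
  induction l with
  | nil => intro b h a ha; simp at ha
  | cons c t ih =>
    intro b hf a ha hlt
    cases hpc : p c with
    | true =>
      rw [List.find?_cons_of_pos hpc] at hf
      injection hf with hb
      subst hb
      rw [List.idxOf_cons_self] at hlt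
      omega
    | false =>
      rw [List.find?_cons_of_neg (by simp [hpc])] at hf
      by_cases hac : a = c
      · subst hac; exact hpc
      · have hbc : b ≠ c := by
          rintro rfl
          rw [List.find?_some hf] at hpc
          cases hpc
        rw [List.idxOf_cons_ne _ (fun h => hac h.symm),
            List.idxOf_cons_ne _ (fun h => hbc h.symm)] at hlt
        have ha' : a ∈ t := by
          rcases List.mem_cons.mp ha with h | h
          · exact absurd h hac
          · exact h
        exact ih hf a ha' (by omega)

lemma my_idxOf_cons_self {α : Type*} (a : α) (l : List α) : List.idxOf a (a :: l) = 0 :=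
  List.idxOf_cons_self

lemma my_idxOf_cons_ne {α : Type*} {a b : α} (l : List α) (h : b ≠ a) :
    List.idxOf a (b :: l) = (List.idxOf a l).succ :=
  List.idxOf_cons_ne l h
/-! ### A sufficient condition for popularity -/

namespace HA

variable {A H : Type*} [Fintype A] [Fintype H]

lemma matchedTo_card_le {I : HA A H} {M : A → Option H} (hM : I.IsMatching M) (h : H) :
    (matchedTo M h).card ≤ I.cap h := hM.2 h

/-- If every applicant is matched to her `f`-house or her `s`-house, and every house with
at least as many admirers as capacity is saturated by admirers, then `M` is popular. -/
lemma popular_of (I : HA A H) (M : A → Option H)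
    (hM : I.IsMatching M) (hperf : Perfect M)
    (hfs : ∀ a, M a = I.fOpt a ∨ M a = I.sOpt a)
    (hfull : ∀ h, I.cap h ≤ (I.admirers h).card →
      I.cap h ≤ (matchedTo M h).card ∧ ∀ a ∈ matchedTo M h, I.fOpt a = some h) :
    I.Popular M := by
  refine ⟨hM, fun M' hM' hdom => ?_⟩
  rw [Dominates] at hdom
  set P : Finset A := univ.filter fun a => Better (I.pref a) (M' a) (M a) with hP
  set Q : Finset A := univ.filter fun a => Better (I.pref a) (M a) (M' a) with hQ
  set K : Finset H := univ.filter fun h => I.cap h ≤ (I.admirers h).card with hK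
  -- every improving applicant moves into a house of `K` that she does not occupy in `M`
  have key : ∀ a ∈ P, ∃ h, M' a = some h ∧ h ∈ K ∧ M a ≠ some h := by
    intro a ha
    rw [hP, mem_filter] at ha
    obtain ⟨-, hb⟩ := ha
    obtain ⟨h, hh⟩ := hb.some_of
    rw [hh] at hb
    obtain ⟨h0, hh0⟩ : ∃ x, M a = some x := by
      have := hperf a
      cases hMa : M a with
      | none => rw [hMa] at this; simp at this
      | some x => exact ⟨x, rfl⟩
    rw [hh0] at hb
    obtain ⟨hmem, hlt⟩ := hb
    have hne : h ≠ h0 := by rintro rfl; omega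
    refine ⟨h, hh, ?_, by rw [hh0]; exact fun e => hne (by injection e with v; exact v.symm)⟩
    rcases hfs a with hcase | hcase
    · -- matched to the first choice: no improvement possible
      exfalso
      rw [hh0] at hcase
      obtain ⟨l, hl⟩ : ∃ l, I.pref a = h0 :: l := by
        cases hpref : I.pref a with
        | nil => rw [fOpt, hpref] at hcase; simp at hcase
        | cons c t =>
          rw [fOpt, hpref] at hcase
          simp at hcase
          exact ⟨t, by rw [hcase]⟩
      rw [hl, List.idxOf_cons_self] at hlt
      omega
    · rw [hh0] at hcase
      cases hpref : I.pref a with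
      | nil => rw [hpref] at hmem; simp at hmem
      | cons h1 t =>
        rw [sOpt, hpref] at hcase
        simp only [List.head?_cons] at hcase
        by_cases hc : (I.admirers h1).card ≤ I.cap h1
        · rw [if_pos hc] at hcase
          have : h1 = h0 := by injection hcase.symm
          subst this
          rw [hpref, List.idxOf_cons_self] at hlt
          omega
        · rw [if_neg hc] at hcase
          have := find?_earlier hcase.symm h (by rw [← hpref]; exact hmem)
            (by rw [← hpref]; exact hlt)
          simp only [decide_eq_false_iff_not, not_lt] at this
          rw [hK, mem_filter]
          exact ⟨mem_univ _, this⟩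
  -- every applicant of `K`-house `h` in `M` who is elsewhere in `M'` is worse off
  have worse : ∀ h ∈ K, ∀ a ∈ matchedTo M h \ matchedTo M' h, a ∈ Q := by
    intro h hh a ha
    rw [mem_sdiff, matchedTo, matchedTo, mem_filter, mem_filter] at ha
    obtain ⟨⟨-, hMa⟩, hMa'⟩ := ha
    rw [hK, mem_filter] at hh
    have hf := (hfull h hh.2).2 a (by rw [matchedTo, mem_filter]; exact ⟨mem_univ _, hMa⟩)
    obtain ⟨l, hl⟩ : ∃ l, I.pref a = h :: l := by
      cases hpref : I.pref a with
      | nil => rw [fOpt, hpref] at hf; simp at hf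
      | cons c t =>
        rw [fOpt, hpref] at hf
        simp at hf
        exact ⟨t, by rw [hf]⟩
    rw [hQ, mem_filter]
    refine ⟨mem_univ _, ?_⟩
    rw [hMa, hl]
    refine better_head ?_ ?_
    · intro e; exact (by simp at hMa'; exact hMa' e :)
    · intro y hy
      rw [← hl]
      exact hM'.1 a y hy
  -- counting
  have hcard : P.card ≤ Q.card := by
    have hdisj1 : ∀ x ∈ K, ∀ y ∈ K, x ≠ y →
        Disjoint (P.filter fun a => M' a = some x) (P.filter fun a => M' a = some y) := by
      intro x _ y _ hxy
      rw [Finset.disjoint_left]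
      intro a hax hay
      rw [mem_filter] at hax hay
      rw [hax.2] at hay
      exact hxy (by injection hay.2)
    have hdisj2 : ∀ x ∈ K, ∀ y ∈ K, x ≠ y →
        Disjoint (matchedTo M x \ matchedTo M' x) (matchedTo M y \ matchedTo M' y) := by
      intro x _ y _ hxy
      rw [Finset.disjoint_left]
      intro a hax hay
      rw [mem_sdiff, matchedTo, mem_filter] at hax hay
      rw [hax.1.2] at hay
      exact hxy (by injection hay.1.2)
    have hsub1 : P ⊆ K.biUnion fun h => P.filter fun a => M' a = some h := by
      intro a ha
      obtain ⟨h, h1, h2, _⟩ := key a ha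
      exact Finset.mem_biUnion.mpr ⟨h, h2, mem_filter.mpr ⟨ha, h1⟩⟩
    have hsub2 : (K.biUnion fun h => matchedTo M h \ matchedTo M' h) ⊆ Q := by
      intro a ha
      obtain ⟨h, hh, ha⟩ := Finset.mem_biUnion.mp ha
      exact worse h hh a ha
    have hterm : ∀ h ∈ K, (P.filter fun a => M' a = some h).card ≤
        (matchedTo M h \ matchedTo M' h).card := by
      intro h hh
      rw [hK, mem_filter] at hh
      have hfull' := (hfull h hh.2).1
      have hcap' : (matchedTo M' h).card ≤ I.cap h := hM'.2 h
      have e1 : (matchedTo M' h ∩ matchedTo M h).card + (matchedTo M' h \ matchedTo M h).card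
          = (matchedTo M' h).card := Finset.card_inter_add_card_sdiff _ _
      have e2 : (matchedTo M h ∩ matchedTo M' h).card + (matchedTo M h \ matchedTo M' h).card
          = (matchedTo M h).card := Finset.card_inter_add_card_sdiff _ _
      have e3 : (matchedTo M' h ∩ matchedTo M h).card = (matchedTo M h ∩ matchedTo M' h).card := by
        rw [Finset.inter_comm]
      have hsub : (P.filter fun a => M' a = some h) ⊆ matchedTo M' h \ matchedTo M h := by
        intro a ha
        rw [mem_filter] at ha
        obtain ⟨haP, haM'⟩ := ha
        rw [hP, mem_filter] at haP
        have hb := haP.2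
        rw [haM'] at hb
        rw [mem_sdiff, matchedTo, matchedTo, mem_filter, mem_filter]
        exact ⟨⟨mem_univ _, haM'⟩, fun hc => hb.ne hc.2⟩
      have := Finset.card_le_card hsub
      omega
    calc P.card ≤ (K.biUnion fun h => P.filter fun a => M' a = some h).card :=
          Finset.card_le_card hsub1
      _ = ∑ h ∈ K, (P.filter fun a => M' a = some h).card := Finset.card_biUnion hdisj1
      _ ≤ ∑ h ∈ K, (matchedTo M h \ matchedTo M' h).card := Finset.sum_le_sum hterm
      _ = (K.biUnion fun h => matchedTo M h \ matchedTo M' h).card :=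
          (Finset.card_biUnion hdisj2).symm
      _ ≤ Q.card := Finset.card_le_card hsub2
  omega

end HA
/-! ### Infrastructure for the reduction instance -/

section Inst

variable {n : ℕ}

/-- applicant `e_i'` -/
abbrev aE (i : Fin (3 * n)) : Appl14 n := Sum.inl i
/-- applicant `s_j^{ℓ+1}` -/
abbrev aS (j : Fin (3 * n)) (ℓ : Fin 4) : Appl14 n := Sum.inr (Sum.inl (j, ℓ))
/-- applicant `a_j` -/
abbrev aA (j : Fin (3 * n)) : Appl14 n := Sum.inr (Sum.inr (Sum.inl j))
/-- applicant `p_j'` -/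
abbrev aP (j : Fin (3 * n)) : Appl14 n := Sum.inr (Sum.inr (Sum.inr (Sum.inl j)))
/-- applicant `q_j^{k+1}` -/
abbrev aQ (j : Fin (3 * n)) (k : Fin 2) : Appl14 n :=
  Sum.inr (Sum.inr (Sum.inr (Sum.inr (j, k))))

variable (D : ThreeDMFlat n) (c : House14 n → ℕ)

lemma pref_aE (i : Fin (3 * n)) : (inst14 D c).pref (aE i) = [he14 i] := rfl
lemma pref_aS (j : Fin (3 * n)) (ℓ : Fin 4) :
    (inst14 D c).pref (aS j ℓ) = [he14 (elem14 D j ℓ), hp14 j, ht14 j] := rfl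
lemma pref_aA (j : Fin (3 * n)) : (inst14 D c).pref (aA j) = [hq14 j, hp14 j, hx14] := rfl
lemma pref_aP (j : Fin (3 * n)) : (inst14 D c).pref (aP j) = [hp14 j] := rfl
lemma pref_aQ (j : Fin (3 * n)) (k : Fin 2) : (inst14 D c).pref (aQ j k) = [hq14 j] := rfl

lemma fOpt_aE (i : Fin (3 * n)) : (inst14 D c).fOpt (aE i) = some (he14 i) := rfl
lemma fOpt_aS (j : Fin (3 * n)) (ℓ : Fin 4) :
    (inst14 D c).fOpt (aS j ℓ) = some (he14 (elem14 D j ℓ)) := rfl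
lemma fOpt_aA (j : Fin (3 * n)) : (inst14 D c).fOpt (aA j) = some (hq14 j) := rfl
lemma fOpt_aP (j : Fin (3 * n)) : (inst14 D c).fOpt (aP j) = some (hp14 j) := rfl
lemma fOpt_aQ (j : Fin (3 * n)) (k : Fin 2) : (inst14 D c).fOpt (aQ j k) = some (hq14 j) := rfl

/-- house constructor discrimination / injectivity, packaged for `simp`. -/
lemma he14_inj {i i' : Fin (3 * n)} : he14 i = he14 i' ↔ i = i' := by simp [he14]
lemma ht14_inj {j j' : Fin (3 * n)} : ht14 j = ht14 j' ↔ j = j' := by simp [ht14]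
lemma hp14_inj {j j' : Fin (3 * n)} : hp14 j = hp14 j' ↔ j = j' := by simp [hp14]
lemma hq14_inj {j j' : Fin (3 * n)} : hq14 j = hq14 j' ↔ j = j' := by simp [hq14]

lemma elem14_0 (j : Fin (3 * n)) : elem14 D j 0 = (D.S j).1 := rfl
lemma elem14_1 (j : Fin (3 * n)) : elem14 D j 1 = (D.S j).2.1 := rfl
lemma elem14_2 (j : Fin (3 * n)) : elem14 D j 2 = (D.S j).2.2 := rfl
lemma elem14_3 (j : Fin (3 * n)) : elem14 D j 3 = (D.S j).2.2 := rfl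

lemma mem_of_elem14 (j : Fin (3 * n)) (ℓ : Fin 4) : D.Mem (elem14 D j ℓ) j := by
  fin_cases ℓ
  · exact Or.inl rfl
  · exact Or.inr (Or.inl rfl)
  · exact Or.inr (Or.inr rfl)
  · exact Or.inr (Or.inr rfl)

lemma elem14_inj (j : Fin (3 * n)) {ℓ ℓ' : Fin 4} (h3 : ℓ ≠ 3) (h3' : ℓ' ≠ 3)
    (h : elem14 D j ℓ = elem14 D j ℓ') : ℓ = ℓ' := by
  have hA := D.partA j
  have hB := D.partB j
  have hC := D.partC j
  fin_cases ℓ <;> fin_cases ℓ' <;>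
    simp_all [elem14_0, elem14_1, elem14_2, elem14_3] <;>
    (try rfl) <;>
    (first
      | (exact absurd (congrArg Fin.val h) (by omega))
      | (exact absurd (congrArg Fin.val h.symm) (by omega)))

/-- For an element `i` of the set `S j`, a canonical `ℓ ≠ 3` with `elem14 D j ℓ = i`. -/
lemma exists_elem14 {i : Fin (3 * n)} {j : Fin (3 * n)} (h : D.Mem i j) :
    ∃ ℓ : Fin 4, ℓ ≠ 3 ∧ elem14 D j ℓ = i := by
  rcases h with h | h | h
  · exact ⟨0, by decide, h⟩
  · exact ⟨1, by decide, h⟩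
  · exact ⟨2, by decide, h⟩

/-- Each set has exactly three elements. -/
lemma card_elems (j : Fin (3 * n)) :
    (univ.filter fun i => D.Mem i j).card = 3 := by
  have hA := D.partA j
  have hB := D.partB j
  have hC := D.partC j
  have : (univ.filter fun i => D.Mem i j) = {(D.S j).1, (D.S j).2.1, (D.S j).2.2} := by
    ext i
    rw [Finset.mem_filter]
    simp only [mem_filter, mem_univ, true_and, Finset.mem_insert, Finset.mem_singleton,
      ThreeDMFlat.Mem]
    constructor
    · rintro (h | h | h) <;> simp [h.symm]
    · rintro (h | h | h) <;> simp [h]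
  rw [this]
  rw [Finset.card_insert_of_notMem, Finset.card_insert_of_notMem, Finset.card_singleton]
  · simp only [Finset.mem_singleton]
    intro h; exact absurd (congrArg Fin.val h) (by omega)
  · simp only [Finset.mem_insert, Finset.mem_singleton]
    rintro (h | h) <;> exact absurd (congrArg Fin.val h) (by omega)

/-- Double counting: the number of (element, covering set in `J`) incidences. -/
lemma sum_cover_count (J : Finset (Fin (3 * n))) :
    ∑ i, (J.filter fun j => D.Mem i j).card = 3 * J.card := by
  have : ∀ i, (J.filter fun j => D.Mem i j).card = ∑ j ∈ J, if D.Mem i j then 1 else 0 :=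
    fun i => Finset.card_filter _ _
  rw [Finset.sum_congr rfl fun i _ => this i, Finset.sum_comm]
  have : ∀ j ∈ J, (∑ i, if D.Mem i j then 1 else 0) = 3 := by
    intro j _
    rw [← Finset.card_filter]
    exact card_elems D j
  rw [Finset.sum_congr rfl this, Finset.sum_const, smul_eq_mul, mul_comm]

lemma exactCover_card {J : Finset (Fin (3 * n))} (hJ : D.ExactCover J) : J.card = n := by
  have h := sum_cover_count D J
  rw [Finset.sum_congr rfl fun i _ => hJ i] at h
  simp only [Finset.sum_const, smul_eq_mul, mul_one, Finset.card_univ, Fintype.card_fin] at h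
  omega

/-- If every element is covered at most once by `J` and `J` has at least `n` members,
then `J` is an exact cover. -/
lemma exactCover_of_disjoint {J : Finset (Fin (3 * n))}
    (h1 : ∀ i, (J.filter fun j => D.Mem i j).card ≤ 1) (h2 : n ≤ J.card) :
    D.ExactCover J := by
  intro i
  have hsum := sum_cover_count D J
  have hle : ∑ i : Fin (3 * n), (J.filter fun j => D.Mem i j).card ≤
      ∑ _i : Fin (3 * n), 1 := Finset.sum_le_sum fun i _ => h1 i
  simp only [Finset.sum_const, smul_eq_mul, mul_one, Finset.card_univ, Fintype.card_fin] at hle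
  have heq : ∑ i : Fin (3 * n), (J.filter fun j => D.Mem i j).card =
      ∑ _i : Fin (3 * n), 1 := by
    simp only [Finset.sum_const, smul_eq_mul, mul_one, Finset.card_univ, Fintype.card_fin]
    omega
  have := (Finset.sum_eq_sum_iff_of_le fun i _ => h1 i).mp heq i (mem_univ i)
  exact this

/-- A canonical position of element `i` inside set `j`. -/
def pick14 (D : ThreeDMFlat n) (i j : Fin (3 * n)) : Fin 4 :=
  if (D.S j).1 = i then 0 else if (D.S j).2.1 = i then 1 else 2

lemma pick14_spec {i j : Fin (3 * n)} (h : D.Mem i j) :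
    elem14 D j (pick14 D i j) = i := by
  rw [pick14]
  rcases h with h | h | h
  · rw [if_pos h]; exact h
  · by_cases h1 : (D.S j).1 = i
    · rw [if_pos h1]; exact h1
    · rw [if_neg h1, if_pos h]; exact h
  · by_cases h1 : (D.S j).1 = i
    · rw [if_pos h1]; exact h1
    · rw [if_neg h1]
      by_cases h2 : (D.S j).2.1 = i
      · rw [if_pos h2]; exact h2
      · rw [if_neg h2]; exact h

/-- Every element house has at least 3 admirers. -/
lemma admirers_he_ge (i : Fin (3 * n)) : 3 ≤ ((inst14 D c).admirers (he14 i)).card := by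
  have hsub : ((univ.filter fun j => D.Mem i j).image fun j => aS j (pick14 D i j)) ⊆
      (inst14 D c).admirers (he14 i) := by
    intro a ha
    obtain ⟨j, hj, rfl⟩ := Finset.mem_image.mp ha
    rw [mem_filter] at hj
    simp only [HA.admirers, Finset.mem_filter]
    refine ⟨mem_univ _, ?_⟩
    rw [fOpt_aS, pick14_spec D hj.2]
  have hinj : Set.InjOn (fun j => aS j (pick14 D i j)) (univ.filter fun j => D.Mem i j) := by
    intro x _ y _ hxy
    simpa using congrArg (fun a => match a with
      | Sum.inr (Sum.inl (j, _)) => j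
      | _ => x) hxy
  have := Finset.card_image_of_injOn hinj
  have hcard : (univ.filter fun j => D.Mem i j).card = 3 := by
    convert D.reg i using 2
    exact Finset.filter_congr fun j _ => by rw [ThreeDMFlat.Mem]
  calc 3 = ((univ.filter fun j => D.Mem i j).image fun j => aS j (pick14 D i j)).card := by
        rw [this, hcard]
    _ ≤ _ := Finset.card_le_card hsub

end Inst
/-! ### The backward direction: from an exact cover to a perfect popular matching -/

section Backward

variable {n : ℕ}

/-- The capacity change vector used in the backward direction. -/
def rB (J : Finset (Fin (3 * n))) : House14 n → ℤ
  | Sum.inl _ => 1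
  | Sum.inr (Sum.inl _) => 0
  | Sum.inr (Sum.inr (Sum.inl j)) => if j ∈ J then 1 else -1
  | Sum.inr (Sum.inr (Sum.inr (Sum.inl _))) => 1
  | Sum.inr (Sum.inr (Sum.inr (Sum.inr _))) => 1

/-- The resulting capacities. -/
def cB (J : Finset (Fin (3 * n))) : House14 n → ℕ :=
  fun h => ((cap14 h : ℤ) + rB J h).toNat

variable (J : Finset (Fin (3 * n)))

lemma cB_he (i : Fin (3 * n)) : cB J (he14 i) = 2 := rfl
lemma cB_ht (j : Fin (3 * n)) : cB J (ht14 j) = 4 := rfl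
lemma cB_hp (j : Fin (3 * n)) : cB J (hp14 j) = if j ∈ J then 3 else 1 := by
  by_cases h : j ∈ J <;> simp [cB, rB, cap14, hp14, h]
lemma cB_hq (j : Fin (3 * n)) : cB J (hq14 j) = 2 := rfl
lemma cB_hx : cB J (hx14 : House14 n) = 2 * n - 1 + 1 := by
  simp only [cB, rB, cap14, hx14]
  omega

variable (D : ThreeDMFlat n)

/-- The perfect popular matching constructed from an exact cover `J`. -/
def MB : Appl14 n → Option (House14 n) :=
  fun a => match a with
  | Sum.inl i => some (he14 i)
  | Sum.inr (Sum.inl (j, ℓ)) =>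
      if j ∈ J then (if ℓ = 3 then some (hp14 j) else some (he14 (elem14 D j ℓ)))
      else some (ht14 j)
  | Sum.inr (Sum.inr (Sum.inl j)) => if j ∈ J then some (hp14 j) else some hx14
  | Sum.inr (Sum.inr (Sum.inr (Sum.inl j))) => some (hp14 j)
  | Sum.inr (Sum.inr (Sum.inr (Sum.inr (j, _)))) => some (hq14 j)

lemma MB_aE (i : Fin (3 * n)) : MB J D (aE i) = some (he14 i) := rfl
lemma MB_aS (j : Fin (3 * n)) (ℓ : Fin 4) : MB J D (aS j ℓ) =
    if j ∈ J then (if ℓ = 3 then some (hp14 j) else some (he14 (elem14 D j ℓ)))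
    else some (ht14 j) := rfl
lemma MB_aA (j : Fin (3 * n)) : MB J D (aA j) =
    if j ∈ J then some (hp14 j) else some hx14 := rfl
lemma MB_aP (j : Fin (3 * n)) : MB J D (aP j) = some (hp14 j) := rfl
lemma MB_aQ (j : Fin (3 * n)) (k : Fin 2) : MB J D (aQ j k) = some (hq14 j) := rfl

lemma MB_perfect : HA.Perfect (MB J D) := by
  intro a
  obtain i | ⟨j, ℓ⟩ | j | j | ⟨j, k⟩ := a
  · rfl
  · rw [MB_aS]; split_ifs <;> rfl
  · rw [MB_aA]; split_ifs <;> rfl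
  · rfl
  · rfl

/-- Membership in `matchedTo`, avoiding decidability-instance trouble. -/
lemma mem_matchedTo {A H : Type*} [Fintype A] {M : A → Option H} {a : A} {h : H} :
    a ∈ HA.matchedTo M h ↔ M a = some h := by
  simp [HA.matchedTo]

lemma mem_admirers {A H : Type*} [Fintype A] {I : HA A H} {a : A} {h : H} :
    a ∈ I.admirers h ↔ I.fOpt a = some h := by
  simp [HA.admirers]

variable (c : House14 n → ℕ)

lemma admirers_hp (j : Fin (3 * n)) : (inst14 D c).admirers (hp14 j) = {aP j} := by
  ext a
  rw [mem_admirers, Finset.mem_singleton]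
  obtain i | ⟨j', ℓ'⟩ | j' | j' | ⟨j', k'⟩ := a <;>
    simp [fOpt_aE, fOpt_aS, fOpt_aA, fOpt_aP, fOpt_aQ, he14, hp14, hq14]

lemma admirers_hq (j : Fin (3 * n)) :
    (inst14 D c).admirers (hq14 j) = {aA j, aQ j 0, aQ j 1} := by
  ext a
  rw [mem_admirers]
  simp only [Finset.mem_insert, Finset.mem_singleton]
  obtain i | ⟨j', ℓ'⟩ | j' | j' | ⟨j', k'⟩ := a
  · simp [fOpt_aE, he14, hq14]
  · simp [fOpt_aS, he14, hq14]
  · simp [fOpt_aA, hq14]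
  · simp [fOpt_aP, hp14, hq14]
  · fin_cases k' <;> simp [fOpt_aQ, hq14, Prod.ext_iff]

lemma admirers_ht (j : Fin (3 * n)) : (inst14 D c).admirers (ht14 j) = ∅ := by
  ext a
  rw [mem_admirers]
  simp only [Finset.notMem_empty, iff_false]
  obtain i | ⟨j', ℓ'⟩ | j' | j' | ⟨j', k'⟩ := a <;>
    simp [fOpt_aE, fOpt_aS, fOpt_aA, fOpt_aP, fOpt_aQ, he14, hp14, hq14, ht14]

lemma admirers_hx : (inst14 D c).admirers (hx14 : House14 n) = ∅ := by
  ext a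
  rw [mem_admirers]
  simp only [Finset.notMem_empty, iff_false]
  obtain i | ⟨j', ℓ'⟩ | j' | j' | ⟨j', k'⟩ := a <;>
    simp [fOpt_aE, fOpt_aS, fOpt_aA, fOpt_aP, fOpt_aQ, he14, hp14, hq14, hx14]

lemma admirers_hp_card (j : Fin (3 * n)) : ((inst14 D c).admirers (hp14 j)).card = 1 := by
  rw [admirers_hp]; rfl

lemma admirers_hq_card (j : Fin (3 * n)) : ((inst14 D c).admirers (hq14 j)).card = 3 := by
  rw [admirers_hq]
  rw [Finset.card_insert_of_notMem (by simp), Finset.card_insert_of_notMem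
    (by simp [Prod.ext_iff]), Finset.card_singleton]

end Backward
section Backward2

variable {n : ℕ} (J : Finset (Fin (3 * n))) (D : ThreeDMFlat n)

lemma inst14_cap (c : House14 n → ℕ) : (inst14 D c).cap = c := rfl

lemma matchedTo_MB_he (hJ : D.ExactCover J) (i : Fin (3 * n)) :
    ∃ j ℓ, j ∈ J ∧ ℓ ≠ (3 : Fin 4) ∧ elem14 D j ℓ = i ∧
      HA.matchedTo (MB J D) (he14 i) = {aE i, aS j ℓ} := by
  obtain ⟨j0, hj0⟩ := Finset.card_eq_one.mp (hJ i)
  have hj0J : j0 ∈ J ∧ D.Mem i j0 := by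
    have : j0 ∈ J.filter fun j => D.Mem i j := by
      rw [hj0]; exact Finset.mem_singleton_self _
    simpa using this
  obtain ⟨ℓ0, hℓ3, hℓe⟩ := exists_elem14 D hj0J.2
  have huniq : ∀ j ∈ J, D.Mem i j → j = j0 := by
    intro j hj hmem
    have : j ∈ J.filter fun j' => D.Mem i j' := Finset.mem_filter.mpr ⟨hj, hmem⟩
    rw [hj0] at this; simpa using this
  refine ⟨j0, ℓ0, hj0J.1, hℓ3, hℓe, Finset.Subset.antisymm ?_ ?_⟩
  · intro a ha
    rw [mem_matchedTo] at ha
    simp only [Finset.mem_insert, Finset.mem_singleton]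
    obtain i' | ⟨j', ℓ'⟩ | j' | j' | ⟨j', k'⟩ := a
    · have : i' = i := by simpa [MB_aE, he14_inj] using ha
      subst this; exact Or.inl rfl
    · rw [MB_aS] at ha
      split_ifs at ha with h1 h2
      · exact absurd ha (by simp [hp14, he14])
      · have he : elem14 D j' ℓ' = i := by simpa [he14_inj] using ha
        have hmem : D.Mem i j' := by rw [← he]; exact mem_of_elem14 D j' ℓ'
        have hjj : j' = j0 := huniq j' h1 hmem
        subst hjj
        have hll : ℓ' = ℓ0 := elem14_inj D j' h2 hℓ3 (by rw [he, hℓe])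
        subst hll
        exact Or.inr rfl
      · exact absurd ha (by simp [ht14, he14])
    · rw [MB_aA] at ha
      split_ifs at ha <;> exact absurd ha (by simp [hp14, hx14, he14])
    · exact absurd ha (by simp [MB_aP, hp14, he14])
    · exact absurd ha (by simp [MB_aQ, hq14, he14])
  · intro a ha
    rw [mem_matchedTo]
    rcases Finset.mem_insert.mp ha with rfl | ha
    · rfl
    · rw [Finset.mem_singleton] at ha
      subst ha
      rw [MB_aS, if_pos hj0J.1, if_neg hℓ3, hℓe]

lemma matchedTo_MB_hp_subset (j : Fin (3 * n)) :
    HA.matchedTo (MB J D) (hp14 j) ⊆ ({aP j, aA j, aS j 3} : Finset (Appl14 n)) := by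
  intro a ha
  rw [mem_matchedTo] at ha
  simp only [Finset.mem_insert, Finset.mem_singleton]
  obtain i' | ⟨j', ℓ'⟩ | j' | j' | ⟨j', k'⟩ := a
  · exact absurd ha (by simp [MB_aE, he14, hp14])
  · rw [MB_aS] at ha
    split_ifs at ha with h1 h2
    · have hjj : j' = j := by simpa [hp14_inj] using ha
      subst hjj; subst h2
      exact Or.inr (Or.inr rfl)
    · exact absurd ha (by simp [he14, hp14])
    · exact absurd ha (by simp [ht14, hp14])
  · rw [MB_aA] at ha
    split_ifs at ha
    · have hjj : j' = j := by simpa [hp14_inj] using ha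
      subst hjj; exact Or.inr (Or.inl rfl)
    · exact absurd ha (by simp [hx14, hp14])
  · have hjj : j' = j := by simpa [MB_aP, hp14_inj] using ha
    subst hjj; exact Or.inl rfl
  · exact absurd ha (by simp [MB_aQ, hq14, hp14])

lemma matchedTo_MB_hp_of_not_mem {j : Fin (3 * n)} (hj : j ∉ J) :
    HA.matchedTo (MB J D) (hp14 j) = {aP j} := by
  refine Finset.Subset.antisymm ?_ ?_
  · intro a ha
    rcases Finset.mem_insert.mp (matchedTo_MB_hp_subset J D j ha) with rfl | ha'
    · exact Finset.mem_singleton_self _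
    · rcases Finset.mem_insert.mp ha' with rfl | ha''
      · rw [mem_matchedTo, MB_aA, if_neg hj] at ha
        exact absurd ha (by simp [hx14, hp14])
      · rw [Finset.mem_singleton] at ha''
        subst ha''
        rw [mem_matchedTo, MB_aS, if_neg hj] at ha
        exact absurd ha (by simp [ht14, hp14])
  · intro a ha
    rw [Finset.mem_singleton] at ha
    subst ha
    rw [mem_matchedTo, MB_aP]

lemma matchedTo_MB_hq (j : Fin (3 * n)) :
    HA.matchedTo (MB J D) (hq14 j) = {aQ j 0, aQ j 1} := by
  refine Finset.Subset.antisymm ?_ ?_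
  · intro a ha
    rw [mem_matchedTo] at ha
    simp only [Finset.mem_insert, Finset.mem_singleton]
    obtain i' | ⟨j', ℓ'⟩ | j' | j' | ⟨j', k'⟩ := a
    · exact absurd ha (by simp [MB_aE, he14, hq14])
    · rw [MB_aS] at ha
      split_ifs at ha <;> exact absurd ha (by simp [hp14, he14, ht14, hq14])
    · rw [MB_aA] at ha
      split_ifs at ha <;> exact absurd ha (by simp [hp14, hx14, hq14])
    · exact absurd ha (by simp [MB_aP, hp14, hq14])
    · have hjj : j' = j := by simpa [MB_aQ, hq14_inj] using ha
      subst hjj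
      fin_cases k'
      · exact Or.inl rfl
      · exact Or.inr rfl
  · intro a ha
    rw [mem_matchedTo]
    rcases Finset.mem_insert.mp ha with rfl | ha
    · rfl
    · rw [Finset.mem_singleton] at ha
      subst ha
      rfl

lemma matchedTo_MB_ht_sub (j : Fin (3 * n)) :
    HA.matchedTo (MB J D) (ht14 j) ⊆ (univ : Finset (Fin 4)).image (aS j) := by
  intro a ha
  rw [mem_matchedTo] at ha
  obtain i' | ⟨j', ℓ'⟩ | j' | j' | ⟨j', k'⟩ := a
  · exact absurd ha (by simp [MB_aE, he14, ht14])
  · rw [MB_aS] at ha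
    split_ifs at ha with h1 h2
    · exact absurd ha (by simp [hp14, ht14])
    · exact absurd ha (by simp [he14, ht14])
    · have : j' = j := by simpa [ht14_inj] using ha
      subst this
      exact Finset.mem_image.mpr ⟨ℓ', mem_univ _, rfl⟩
  · rw [MB_aA] at ha
    split_ifs at ha <;> exact absurd ha (by simp [hp14, hx14, ht14])
  · exact absurd ha (by simp [MB_aP, hp14, ht14])
  · exact absurd ha (by simp [MB_aQ, hq14, ht14])

lemma matchedTo_MB_hx :
    HA.matchedTo (MB J D) (hx14 : House14 n) = (univ.filter fun j => j ∉ J).image aA := by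
  refine Finset.Subset.antisymm ?_ ?_
  · intro a ha
    rw [mem_matchedTo] at ha
    obtain i' | ⟨j', ℓ'⟩ | j' | j' | ⟨j', k'⟩ := a
    · exact absurd ha (by simp [MB_aE, he14, hx14])
    · rw [MB_aS] at ha
      split_ifs at ha <;> exact absurd ha (by simp [hp14, he14, ht14, hx14])
    · rw [MB_aA] at ha
      split_ifs at ha with h1
      · exact absurd ha (by simp [hp14, hx14])
      · exact Finset.mem_image.mpr ⟨j', Finset.mem_filter.mpr ⟨mem_univ _, h1⟩, rfl⟩
    · exact absurd ha (by simp [MB_aP, hp14, hx14])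
    · exact absurd ha (by simp [MB_aQ, hq14, hx14])
  · intro a ha
    obtain ⟨j', hj', rfl⟩ := Finset.mem_image.mp ha
    rw [Finset.mem_filter] at hj'
    rw [mem_matchedTo, MB_aA, if_neg hj'.2]

end Backward2
section Backward3

variable {n : ℕ} (J : Finset (Fin (3 * n))) (D : ThreeDMFlat n)

lemma not_le_adm_he (i : Fin (3 * n)) :
    ¬ (((inst14 D (cB J)).admirers (he14 i)).card ≤ (inst14 D (cB J)).cap (he14 i)) := by
  have h := admirers_he_ge D (cB J) i
  have : (inst14 D (cB J)).cap (he14 i) = 2 := rfl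
  omega

lemma not_lt_adm_he (i : Fin (3 * n)) :
    ¬ (((inst14 D (cB J)).admirers (he14 i)).card < (inst14 D (cB J)).cap (he14 i)) := by
  have h := admirers_he_ge D (cB J) i
  have : (inst14 D (cB J)).cap (he14 i) = 2 := rfl
  omega

lemma sOpt_MB_aS (j : Fin (3 * n)) (ℓ : Fin 4) :
    (inst14 D (cB J)).sOpt (aS j ℓ) =
      if j ∈ J then some (hp14 j) else some (ht14 j) := by
  have hpref : (inst14 D (cB J)).pref (aS j ℓ) = [he14 (elem14 D j ℓ), hp14 j, ht14 j] := rfl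
  rw [HA.sOpt, hpref]
  simp only [List.head?_cons]
  rw [if_neg (not_le_adm_he J D (elem14 D j ℓ))]
  rw [List.find?_cons_of_neg (by simpa using not_lt_adm_he J D (elem14 D j ℓ))]
  by_cases hj : j ∈ J
  · rw [if_pos hj]
    rw [List.find?_cons_of_pos (by
      simp only [decide_eq_true_eq]
      rw [admirers_hp_card, inst14_cap, cB_hp, if_pos hj]
      omega)]
  · rw [if_neg hj]
    rw [List.find?_cons_of_neg (by
      simp only [decide_eq_true_eq, not_lt]
      rw [admirers_hp_card, inst14_cap, cB_hp, if_neg hj])]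
    rw [List.find?_cons_of_pos (by
      simp only [decide_eq_true_eq]
      rw [admirers_ht, Finset.card_empty, inst14_cap, cB_ht]
      omega)]

lemma sOpt_MB_aA (j : Fin (3 * n)) :
    (inst14 D (cB J)).sOpt (aA j) =
      if j ∈ J then some (hp14 j) else some hx14 := by
  have hpref : (inst14 D (cB J)).pref (aA j) = [hq14 j, hp14 j, hx14] := rfl
  rw [HA.sOpt, hpref]
  simp only [List.head?_cons]
  rw [if_neg (by
    rw [admirers_hq_card, inst14_cap, cB_hq]
    omega)]
  rw [List.find?_cons_of_neg (by
    simp only [decide_eq_true_eq, not_lt]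
    rw [admirers_hq_card, inst14_cap, cB_hq]
    omega)]
  by_cases hj : j ∈ J
  · rw [if_pos hj]
    rw [List.find?_cons_of_pos (by
      simp only [decide_eq_true_eq]
      rw [admirers_hp_card, inst14_cap, cB_hp, if_pos hj]
      omega)]
  · rw [if_neg hj]
    rw [List.find?_cons_of_neg (by
      simp only [decide_eq_true_eq, not_lt]
      rw [admirers_hp_card, inst14_cap, cB_hp, if_neg hj])]
    rw [List.find?_cons_of_pos (by
      simp only [decide_eq_true_eq]
      rw [admirers_hx, Finset.card_empty, inst14_cap, cB_hx]
      omega)]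

lemma aE_ne_aS (i : Fin (3 * n)) (j : Fin (3 * n)) (ℓ : Fin 4) : aE i ≠ aS j ℓ := by
  simp [aE, aS]

lemma MB_isMatching (hJ : D.ExactCover J) : (inst14 D (cB J)).IsMatching (MB J D) := by
  constructor
  · intro a h hM
    obtain i | ⟨j, ℓ⟩ | j | j | ⟨j, k⟩ := a
    · rw [MB_aE] at hM; injection hM with h'; rw [← h']; simp [pref_aE]
    · rw [MB_aS] at hM
      split_ifs at hM <;> (injection hM with h'; rw [← h']; simp [pref_aS])
    · rw [MB_aA] at hM
      split_ifs at hM <;> (injection hM with h'; rw [← h']; simp [pref_aA])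
    · rw [MB_aP] at hM; injection hM with h'; rw [← h']; simp [pref_aP]
    · rw [MB_aQ] at hM; injection hM with h'; rw [← h']; simp [pref_aQ]
  · intro h
    obtain i | j | j | j | u := h
    · show (HA.matchedTo (MB J D) (he14 i)).card ≤ cB J (he14 i)
      obtain ⟨j, ℓ, -, -, -, hset⟩ := matchedTo_MB_he J D hJ i
      rw [hset, cB_he]
      exact (Finset.card_insert_le _ _).trans (by simp)
    · show (HA.matchedTo (MB J D) (ht14 j)).card ≤ cB J (ht14 j)
      rw [cB_ht]
      calc (HA.matchedTo (MB J D) (ht14 j)).card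
          ≤ ((univ : Finset (Fin 4)).image (aS j)).card :=
            Finset.card_le_card (matchedTo_MB_ht_sub J D j)
        _ ≤ (univ : Finset (Fin 4)).card := Finset.card_image_le
        _ = 4 := by simp
    · show (HA.matchedTo (MB J D) (hp14 j)).card ≤ cB J (hp14 j)
      rw [cB_hp]
      by_cases hj : j ∈ J
      · rw [if_pos hj]
        calc (HA.matchedTo (MB J D) (hp14 j)).card
            ≤ ({aP j, aA j, aS j 3} : Finset (Appl14 n)).card :=
              Finset.card_le_card (matchedTo_MB_hp_subset J D j)
          _ ≤ 3 := by
              refine (Finset.card_insert_le _ _).trans (Nat.succ_le_succ ?_)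
              exact (Finset.card_insert_le _ _).trans (by simp)
      · rw [if_neg hj, matchedTo_MB_hp_of_not_mem J D hj, Finset.card_singleton]
    · show (HA.matchedTo (MB J D) (hq14 j)).card ≤ cB J (hq14 j)
      rw [matchedTo_MB_hq, cB_hq]
      exact (Finset.card_insert_le _ _).trans (by simp)
    · cases u
      show (HA.matchedTo (MB J D) (hx14 : House14 n)).card ≤ cB J hx14
      rw [matchedTo_MB_hx, cB_hx]
      have h2 : (univ.filter fun j : Fin (3 * n) => j ∉ J) = Jᶜ := by
        ext j; simp
      rw [h2]
      have h1 : (Jᶜ.image (aA : Fin (3 * n) → Appl14 n)).card ≤ Jᶜ.card :=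
        Finset.card_image_le
      rw [Finset.card_compl] at h1
      have h3 : J.card = n := exactCover_card D hJ
      simp only [Fintype.card_fin] at h1
      omega

lemma MB_hfull (hJ : D.ExactCover J) :
    ∀ h, (inst14 D (cB J)).cap h ≤ ((inst14 D (cB J)).admirers h).card →
      (inst14 D (cB J)).cap h ≤ (HA.matchedTo (MB J D) h).card ∧
      ∀ a ∈ HA.matchedTo (MB J D) h, (inst14 D (cB J)).fOpt a = some h := by
  intro h
  obtain i | j | j | j | u := h
  · intro _
    show 2 ≤ (HA.matchedTo (MB J D) (he14 i)).card ∧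
      ∀ a ∈ HA.matchedTo (MB J D) (he14 i), (inst14 D (cB J)).fOpt a = some (he14 i)
    obtain ⟨j, ℓ, -, -, hle, hset⟩ := matchedTo_MB_he J D hJ i
    constructor
    · rw [hset, Finset.card_insert_of_notMem (by simp [aE_ne_aS]), Finset.card_singleton]
    · intro a ha
      rw [hset] at ha
      rcases Finset.mem_insert.mp ha with rfl | ha
      · rfl
      · rw [Finset.mem_singleton] at ha
        subst ha
        rw [fOpt_aS, hle]
  · intro hcap
    exfalso
    have hcap' : (inst14 D (cB J)).cap (ht14 j) ≤ ((inst14 D (cB J)).admirers (ht14 j)).card :=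
      hcap
    rw [admirers_ht, Finset.card_empty] at hcap'
    exact Nat.not_succ_le_zero 3 hcap'
  · intro hcap
    have hcap' : (inst14 D (cB J)).cap (hp14 j) ≤ ((inst14 D (cB J)).admirers (hp14 j)).card :=
      hcap
    rw [admirers_hp_card] at hcap'
    show (inst14 D (cB J)).cap (hp14 j) ≤ (HA.matchedTo (MB J D) (hp14 j)).card ∧
      ∀ a ∈ HA.matchedTo (MB J D) (hp14 j), (inst14 D (cB J)).fOpt a = some (hp14 j)
    by_cases hjJ : j ∈ J
    · exfalso
      have h3 : (inst14 D (cB J)).cap (hp14 j) = 3 := by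
        rw [inst14_cap, cB_hp, if_pos hjJ]
      omega
    · have hcap1 : (inst14 D (cB J)).cap (hp14 j) = 1 := by
        rw [inst14_cap, cB_hp, if_neg hjJ]
      rw [hcap1]
      constructor
      · rw [matchedTo_MB_hp_of_not_mem J D hjJ, Finset.card_singleton]
      · intro a ha
        rw [matchedTo_MB_hp_of_not_mem J D hjJ, Finset.mem_singleton] at ha
        subst ha
        rfl
  · intro _
    show 2 ≤ (HA.matchedTo (MB J D) (hq14 j)).card ∧
      ∀ a ∈ HA.matchedTo (MB J D) (hq14 j), (inst14 D (cB J)).fOpt a = some (hq14 j)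
    constructor
    · rw [matchedTo_MB_hq, Finset.card_insert_of_notMem (by simp [Prod.ext_iff]),
        Finset.card_singleton]
    · intro a ha
      rw [matchedTo_MB_hq] at ha
      rcases Finset.mem_insert.mp ha with rfl | ha
      · rfl
      · rw [Finset.mem_singleton] at ha
        subst ha
        rfl
  · cases u
    intro hcap
    exfalso
    have hcap' : (inst14 D (cB J)).cap (hx14 : House14 n) ≤
        ((inst14 D (cB J)).admirers (hx14 : House14 n)).card := hcap
    rw [admirers_hx, Finset.card_empty, inst14_cap, cB_hx] at hcap'
    omega

lemma MB_hfs : ∀ a, MB J D a = (inst14 D (cB J)).fOpt a ∨ MB J D a = (inst14 D (cB J)).sOpt a := by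
  intro a
  obtain i | ⟨j, ℓ⟩ | j | j | ⟨j, k⟩ := a
  · exact Or.inl rfl
  · by_cases hj : j ∈ J
    · by_cases hl : ℓ = 3
      · right
        rw [MB_aS, if_pos hj, if_pos hl, sOpt_MB_aS, if_pos hj]
      · left
        rw [MB_aS, if_pos hj, if_neg hl, fOpt_aS]
    · right
      rw [MB_aS, if_neg hj, sOpt_MB_aS, if_neg hj]
  · right
    rw [MB_aA, sOpt_MB_aA]
  · exact Or.inl rfl
  · exact Or.inl rfl

lemma MB_popular (hJ : D.ExactCover J) : (inst14 D (cB J)).Popular (MB J D) :=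
  HA.popular_of _ _ (MB_isMatching J D hJ) (MB_perfect J D) (MB_hfs J D) (MB_hfull J D hJ)

end Backward3
section Forward

variable {n : ℕ} (D : ThreeDMFlat n) (c : House14 n → ℕ) (M : Appl14 n → Option (House14 n))

/-- Who can be matched to `hq j`. -/
lemma eq_of_matched_hq (hM : (inst14 D c).IsMatching M) {j : Fin (3 * n)} {b : Appl14 n}
    (hb : M b = some (hq14 j)) : b = aA j ∨ b = aQ j 0 ∨ b = aQ j 1 := by
  have hmem := hM.1 b _ hb
  obtain i' | ⟨j', ℓ'⟩ | j' | j' | ⟨j', k'⟩ := b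
  · rw [pref_aE] at hmem
    exact absurd hmem (by simp [he14, hq14])
  · rw [pref_aS] at hmem
    exact absurd hmem (by simp [he14, hp14, ht14, hq14])
  · rw [pref_aA] at hmem
    have : j' = j := by
      rcases List.mem_cons.mp hmem with h | h
      · exact hq14_inj.mp h.symm
      · exact absurd h (by simp [hp14, hx14, hq14])
    subst this
    exact Or.inl rfl
  · rw [pref_aP] at hmem
    exact absurd hmem (by simp [hp14, hq14])
  · rw [pref_aQ] at hmem
    have : j' = j := by
      rw [List.mem_singleton] at hmem
      exact hq14_inj.mp hmem.symm
    subst this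
    fin_cases k'
    · exact Or.inr (Or.inl rfl)
    · exact Or.inr (Or.inr rfl)

/-- The two `q`-applicants fill `hq j` in any perfect matching. -/
lemma hq_filled (hM : (inst14 D c).IsMatching M) (hperf : HA.Perfect M) (j : Fin (3 * n)) :
    M (aQ j 0) = some (hq14 j) ∧ M (aQ j 1) = some (hq14 j) ∧ 2 ≤ c (hq14 j) := by
  have hq : ∀ k : Fin 2, M (aQ j k) = some (hq14 j) := by
    intro k
    obtain ⟨h, hh⟩ := Option.isSome_iff_exists.mp (hperf (aQ j k))
    have := hM.1 _ _ hh
    rw [pref_aQ, List.mem_singleton] at this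
    rw [hh, this]
  refine ⟨hq 0, hq 1, ?_⟩
  have hsub : ({aQ j 0, aQ j 1} : Finset (Appl14 n)) ⊆ HA.matchedTo M (hq14 j) := by
    intro a ha
    rw [mem_matchedTo]
    rcases Finset.mem_insert.mp ha with rfl | ha
    · exact hq 0
    · rw [Finset.mem_singleton] at ha; subst ha; exact hq 1
  have h2 : ({aQ j 0, aQ j 1} : Finset (Appl14 n)).card = 2 := by
    rw [Finset.card_insert_of_notMem (by simp [Prod.ext_iff]), Finset.card_singleton]
  calc 2 = _ := h2.symm
    _ ≤ (HA.matchedTo M (hq14 j)).card := Finset.card_le_card hsub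
    _ ≤ c (hq14 j) := hM.2 _

lemma aP_matched (hM : (inst14 D c).IsMatching M) (hperf : HA.Perfect M) (j : Fin (3 * n)) :
    M (aP j) = some (hp14 j) := by
  obtain ⟨h, hh⟩ := Option.isSome_iff_exists.mp (hperf (aP j))
  have := hM.1 _ _ hh
  rw [pref_aP, List.mem_singleton] at this
  rw [hh, this]

lemma aE_matched (hM : (inst14 D c).IsMatching M) (hperf : HA.Perfect M) (i : Fin (3 * n)) :
    M (aE i) = some (he14 i) := by
  obtain ⟨h, hh⟩ := Option.isSome_iff_exists.mp (hperf (aE i))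
  have := hM.1 _ _ hh
  rw [pref_aE, List.mem_singleton] at this
  rw [hh, this]

lemma aA_cases (hM : (inst14 D c).IsMatching M) (hperf : HA.Perfect M) {j : Fin (3 * n)}
    (hcq2 : c (hq14 j) ≤ 2) :
    M (aA j) = some (hp14 j) ∨ M (aA j) = some hx14 := by
  obtain ⟨h, hh⟩ := Option.isSome_iff_exists.mp (hperf (aA j))
  have hmem := hM.1 _ _ hh
  rw [pref_aA] at hmem
  rcases List.mem_cons.mp hmem with rfl | hmem
  · exfalso
    obtain ⟨hq0, hq1, -⟩ := hq_filled D c M hM hperf j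
    have hsub : ({aA j, aQ j 0, aQ j 1} : Finset (Appl14 n)) ⊆ HA.matchedTo M (hq14 j) := by
      intro a ha
      rw [mem_matchedTo]
      rcases Finset.mem_insert.mp ha with rfl | ha
      · exact hh
      · rcases Finset.mem_insert.mp ha with rfl | ha
        · exact hq0
        · rw [Finset.mem_singleton] at ha; subst ha; exact hq1
    have h3 : ({aA j, aQ j 0, aQ j 1} : Finset (Appl14 n)).card = 3 := by
      rw [Finset.card_insert_of_notMem (by simp),
        Finset.card_insert_of_notMem (by simp [Prod.ext_iff]), Finset.card_singleton]
    have hle : (3 : ℕ) ≤ c (hq14 j) := by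
      calc 3 = _ := h3.symm
        _ ≤ (HA.matchedTo M (hq14 j)).card := Finset.card_le_card hsub
        _ ≤ c (hq14 j) := hM.2 _
    omega
  · rcases List.mem_cons.mp hmem with rfl | hmem
    · left; rw [hh]
    · rw [List.mem_singleton] at hmem; subst hmem; right; rw [hh]

lemma aS_cases (hM : (inst14 D c).IsMatching M) (hperf : HA.Perfect M) (j : Fin (3 * n))
    (ℓ : Fin 4) : M (aS j ℓ) = some (he14 (elem14 D j ℓ)) ∨ M (aS j ℓ) = some (hp14 j) ∨
      M (aS j ℓ) = some (ht14 j) := by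
  obtain ⟨h, hh⟩ := Option.isSome_iff_exists.mp (hperf (aS j ℓ))
  have hmem := hM.1 _ _ hh
  rw [pref_aS] at hmem
  rcases List.mem_cons.mp hmem with rfl | hmem
  · left; rw [hh]
  · rcases List.mem_cons.mp hmem with rfl | hmem
    · right; left; rw [hh]
    · rw [List.mem_singleton] at hmem; subst hmem; right; right; rw [hh]

/-- Two distinct `s`-applicants cannot both live in the element house `he i`. -/
lemma he_two_s (hM : (inst14 D c).IsMatching M) (hperf : HA.Perfect M) {i : Fin (3 * n)}
    (hce : c (he14 i) ≤ 2) {j j' : Fin (3 * n)} {ℓ ℓ' : Fin 4}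
    (h1 : M (aS j ℓ) = some (he14 i)) (h2 : M (aS j' ℓ') = some (he14 i))
    (hne : aS j ℓ ≠ aS j' ℓ') : False := by
  have hsub : ({aE i, aS j ℓ, aS j' ℓ'} : Finset (Appl14 n)) ⊆ HA.matchedTo M (he14 i) := by
    intro a ha
    rw [mem_matchedTo]
    rcases Finset.mem_insert.mp ha with rfl | ha
    · exact aE_matched D c M hM hperf i
    · rcases Finset.mem_insert.mp ha with rfl | ha
      · exact h1
      · rw [Finset.mem_singleton] at ha; subst ha; exact h2
  have h3 : ({aE i, aS j ℓ, aS j' ℓ'} : Finset (Appl14 n)).card = 3 := by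
    rw [Finset.card_insert_of_notMem (by simp),
      Finset.card_insert_of_notMem (by simpa using hne), Finset.card_singleton]
  have : (3 : ℕ) ≤ c (he14 i) := by
    calc 3 = _ := h3.symm
      _ ≤ (HA.matchedTo M (he14 i)).card := Finset.card_le_card hsub
      _ ≤ c (he14 i) := hM.2 _
  omega

/-- If `a_j` sits in `hp j`, two distinct `s`-applicants of set `j` cannot both sit there. -/
lemma hp_two_s (hM : (inst14 D c).IsMatching M) (hperf : HA.Perfect M) {j : Fin (3 * n)}
    (hcp : c (hp14 j) ≤ 3) (hA : M (aA j) = some (hp14 j)) {ℓ ℓ' : Fin 4}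
    (h1 : M (aS j ℓ) = some (hp14 j)) (h2 : M (aS j ℓ') = some (hp14 j))
    (hne : ℓ ≠ ℓ') : False := by
  have hsub : ({aP j, aA j, aS j ℓ, aS j ℓ'} : Finset (Appl14 n)) ⊆
      HA.matchedTo M (hp14 j) := by
    intro a ha
    rw [mem_matchedTo]
    rcases Finset.mem_insert.mp ha with rfl | ha
    · exact aP_matched D c M hM hperf j
    · rcases Finset.mem_insert.mp ha with rfl | ha
      · exact hA
      · rcases Finset.mem_insert.mp ha with rfl | ha
        · exact h1
        · rw [Finset.mem_singleton] at ha; subst ha; exact h2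
  have h4 : ({aP j, aA j, aS j ℓ, aS j ℓ'} : Finset (Appl14 n)).card = 4 := by
    rw [Finset.card_insert_of_notMem (by simp),
      Finset.card_insert_of_notMem (by simp),
      Finset.card_insert_of_notMem (by simp [Prod.ext_iff, hne]), Finset.card_singleton]
  have : (4 : ℕ) ≤ c (hp14 j) := by
    calc 4 = _ := h4.symm
      _ ≤ (HA.matchedTo M (hp14 j)).card := Finset.card_le_card hsub
      _ ≤ c (hp14 j) := hM.2 _
  omega

/-- The key domination argument: in a popular perfect matching, if `a_j` occupies `p_j`
then no `s_j^ℓ` occupies `t_j`. -/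
lemma no_s_at_t (hpop : (inst14 D c).Popular M) (hperf : HA.Perfect M) {j : Fin (3 * n)}
    {ℓ : Fin 4} (hA : M (aA j) = some (hp14 j)) (hS : M (aS j ℓ) = some (ht14 j)) : False := by
  have hM := hpop.1
  obtain ⟨hq0, hq1, hcq⟩ := hq_filled D c M hM hperf j
  set M' : Appl14 n → Option (House14 n) := fun b =>
    if b = aA j then some (hq14 j) else if b = aS j ℓ then some (hp14 j)
    else if b = aQ j 0 then none else M b with hM'def
  have hM'aA : M' (aA j) = some (hq14 j) := by rw [hM'def]; simp
  have hM'aS : M' (aS j ℓ) = some (hp14 j) := by rw [hM'def]; simp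
  have hM'aQ : M' (aQ j 0) = none := by rw [hM'def]; simp
  have hM'other : ∀ b, b ≠ aA j → b ≠ aS j ℓ → b ≠ aQ j 0 → M' b = M b := by
    intro b h1 h2 h3
    rw [hM'def]
    simp [h1, h2, h3]
  have hM'match : (inst14 D c).IsMatching M' := by
    constructor
    · intro b h hb
      by_cases h1 : b = aA j
      · subst h1; rw [hM'aA] at hb; injection hb with e; rw [← e]; simp [pref_aA]
      · by_cases h2 : b = aS j ℓ
        · subst h2; rw [hM'aS] at hb; injection hb with e; rw [← e]; simp [pref_aS]
        · by_cases h3 : b = aQ j 0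
          · subst h3; rw [hM'aQ] at hb; cases hb
          · rw [hM'other b h1 h2 h3] at hb; exact hM.1 b h hb
    · intro h
      by_cases hh1 : h = hq14 j
      · subst hh1
        have hsub : HA.matchedTo M' (hq14 j) ⊆ {aA j, aQ j 1} := by
          intro b hb
          rw [mem_matchedTo] at hb
          by_cases h1 : b = aA j
          · subst h1; exact Finset.mem_insert_self _ _
          · by_cases h2 : b = aS j ℓ
            · subst h2; rw [hM'aS] at hb; exact absurd hb (by simp [hp14, hq14])
            · by_cases h3 : b = aQ j 0
              · subst h3; rw [hM'aQ] at hb; cases hb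
              · rw [hM'other b h1 h2 h3] at hb
                rcases eq_of_matched_hq D c M hM hb with rfl | rfl | rfl
                · exact absurd rfl h1
                · exact absurd rfl h3
                · exact Finset.mem_insert_of_mem (Finset.mem_singleton_self _)
        calc (HA.matchedTo M' (hq14 j)).card ≤ ({aA j, aQ j 1} : Finset (Appl14 n)).card :=
              Finset.card_le_card hsub
          _ ≤ 2 := (Finset.card_insert_le _ _).trans (by simp)
          _ ≤ (inst14 D c).cap (hq14 j) := hcq
      · by_cases hh2 : h = hp14 j
        · subst hh2
          have hAmem : aA j ∈ HA.matchedTo M (hp14 j) := mem_matchedTo.mpr hA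
          have hsub : HA.matchedTo M' (hp14 j) ⊆
              insert (aS j ℓ) ((HA.matchedTo M (hp14 j)).erase (aA j)) := by
            intro b hb
            rw [mem_matchedTo] at hb
            by_cases h1 : b = aA j
            · subst h1; rw [hM'aA] at hb; exact absurd hb (by simp [hp14, hq14])
            · by_cases h2 : b = aS j ℓ
              · subst h2; exact Finset.mem_insert_self _ _
              · by_cases h3 : b = aQ j 0
                · subst h3; rw [hM'aQ] at hb; cases hb
                · rw [hM'other b h1 h2 h3] at hb
                  exact Finset.mem_insert_of_mem
                    (Finset.mem_erase.mpr ⟨h1, mem_matchedTo.mpr hb⟩)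
          have e1 := Finset.card_le_card hsub
          have e2 := Finset.card_insert_le (aS j ℓ) ((HA.matchedTo M (hp14 j)).erase (aA j))
          have e3 := Finset.card_erase_of_mem hAmem
          have e4 : 1 ≤ (HA.matchedTo M (hp14 j)).card :=
            Finset.card_pos.mpr ⟨aA j, hAmem⟩
          have e5 : (HA.matchedTo M (hp14 j)).card ≤ c (hp14 j) := hM.2 _
          show (HA.matchedTo M' (hp14 j)).card ≤ c (hp14 j)
          omega
        · have hsub : HA.matchedTo M' h ⊆ HA.matchedTo M h := by
            intro b hb
            rw [mem_matchedTo] at hb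
            rw [mem_matchedTo]
            by_cases h1 : b = aA j
            · subst h1; rw [hM'aA] at hb; injection hb with e; exact absurd e.symm hh1
            · by_cases h2 : b = aS j ℓ
              · subst h2; rw [hM'aS] at hb; injection hb with e; exact absurd e.symm hh2
              · by_cases h3 : b = aQ j 0
                · subst h3; rw [hM'aQ] at hb; cases hb
                · rw [hM'other b h1 h2 h3] at hb; exact hb
          exact (Finset.card_le_card hsub).trans (hM.2 h)
  have hbetA : Better ((inst14 D c).pref (aA j)) (some (hq14 j)) (some (hp14 j)) := by
    rw [pref_aA]
    refine ⟨List.mem_cons_self, ?_⟩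
    rw [my_idxOf_cons_self,
      my_idxOf_cons_ne _ (show hq14 j ≠ hp14 j by simp [hq14, hp14])]
    exact Nat.succ_pos _
  have hbetS : Better ((inst14 D c).pref (aS j ℓ)) (some (hp14 j)) (some (ht14 j)) := by
    rw [pref_aS]
    refine ⟨List.mem_cons_of_mem _ (List.mem_cons_self), ?_⟩
    rw [my_idxOf_cons_ne _ (show he14 (elem14 D j ℓ) ≠ hp14 j by simp [he14, hp14]),
      my_idxOf_cons_self,
      my_idxOf_cons_ne _ (show he14 (elem14 D j ℓ) ≠ ht14 j by simp [he14, ht14]),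
      my_idxOf_cons_ne _ (show hp14 j ≠ ht14 j by simp [hp14, ht14]),
      my_idxOf_cons_self]
    omega
  have hPset : (univ.filter fun b => Better ((inst14 D c).pref b) (M' b) (M b)) =
      ({aA j, aS j ℓ} : Finset (Appl14 n)) := by
    ext b
    simp only [mem_filter, mem_univ, true_and, Finset.mem_insert, Finset.mem_singleton]
    by_cases h1 : b = aA j
    · subst h1
      rw [hM'aA, hA]
      exact iff_of_true hbetA (Or.inl rfl)
    · by_cases h2 : b = aS j ℓ
      · subst h2
        rw [hM'aS, hS]
        exact iff_of_true hbetS (Or.inr rfl)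
      · by_cases h3 : b = aQ j 0
        · subst h3
          refine iff_of_false ?_ (by rintro (h | h) <;> simp at h)
          intro hcon
          obtain ⟨x, hx⟩ := Better.some_of hcon
          rw [hM'aQ] at hx
          cases hx
        · refine iff_of_false ?_ ?_
          · rw [hM'other b h1 h2 h3]
            exact Better.irrefl _ _
          · rintro (h | h)
            · exact h1 h
            · exact h2 h
  have hQset : (univ.filter fun b => Better ((inst14 D c).pref b) (M b) (M' b)) =
      ({aQ j 0} : Finset (Appl14 n)) := by
    ext b
    simp only [mem_filter, mem_univ, true_and, Finset.mem_singleton]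
    by_cases h1 : b = aA j
    · subst h1
      refine iff_of_false ?_ (by simp)
      rw [hM'aA, hA, pref_aA]
      exact not_better_head
    · by_cases h2 : b = aS j ℓ
      · subst h2
        refine iff_of_false ?_ (by simp)
        rw [hM'aS, hS, pref_aS]
        rintro ⟨-, hlt⟩
        rw [my_idxOf_cons_ne _ (show he14 (elem14 D j ℓ) ≠ hp14 j by simp [he14, hp14]),
          my_idxOf_cons_self,
          my_idxOf_cons_ne _ (show he14 (elem14 D j ℓ) ≠ ht14 j by simp [he14, ht14]),
          my_idxOf_cons_ne _ (show hp14 j ≠ ht14 j by simp [hp14, ht14]),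
          my_idxOf_cons_self] at hlt
        omega
      · by_cases h3 : b = aQ j 0
        · subst h3
          rw [hM'aQ, hq0]
          refine iff_of_true ?_ rfl
          rw [pref_aQ]
          exact List.mem_singleton_self _
        · refine iff_of_false ?_ h3
          rw [hM'other b h1 h2 h3]
          exact Better.irrefl _ _
  have hdom : (inst14 D c).Dominates M' M := by
    rw [HA.Dominates, hPset, hQset]
    rw [Finset.card_singleton, Finset.card_insert_of_notMem (by simp), Finset.card_singleton]
    omega
  exact hpop.2 M' hM'match hdom

/-- If `a_j` occupies `p_j` in a popular perfect matching, every element of `S_j` houses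
an `s`-applicant of set `j`. -/
lemma s_at_elements (hpop : (inst14 D c).Popular M) (hperf : HA.Perfect M)
    {j : Fin (3 * n)} (hcp : c (hp14 j) ≤ 3) (hce : ∀ i, c (he14 i) ≤ 2)
    (hA : M (aA j) = some (hp14 j)) :
    ∀ i, D.Mem i j → ∃ ℓ, M (aS j ℓ) = some (he14 i) := by
  have hM := hpop.1
  have hcases : ∀ ℓ, M (aS j ℓ) = some (he14 (elem14 D j ℓ)) ∨ M (aS j ℓ) = some (hp14 j) := by
    intro ℓ
    rcases aS_cases D c M hM hperf j ℓ with h | h | h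
    · exact Or.inl h
    · exact Or.inr h
    · exact absurd (no_s_at_t D c M hpop hperf hA h) (fun hf => hf)
  have honep : ∀ ℓ ℓ' : Fin 4, M (aS j ℓ) = some (hp14 j) → M (aS j ℓ') = some (hp14 j) →
      ℓ = ℓ' := by
    intro ℓ ℓ' h1 h2
    by_contra hne
    exact hp_two_s D c M hM hperf hcp hA h1 h2 hne
  have h34 : ¬ (M (aS j 2) = some (he14 (D.S j).2.2) ∧ M (aS j 3) = some (he14 (D.S j).2.2)) := by
    rintro ⟨h1, h2⟩
    exact he_two_s D c M hM hperf (hce _) h1 h2 (by simp)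
  have h23cases : M (aS j 2) = some (he14 (D.S j).2.2) ∨ M (aS j 3) = some (he14 (D.S j).2.2) := by
    rcases hcases 2 with h2 | h2
    · left; rw [h2, elem14_2]
    · rcases hcases 3 with h3 | h3
      · right; rw [h3, elem14_3]
      · exact absurd (honep 2 3 h2 h3) (by decide)
  intro i hi
  rcases hi with hi | hi | hi
  · refine ⟨0, ?_⟩
    rcases hcases 0 with h | h
    · rw [h, elem14_0, hi]
    · exfalso
      rcases hcases 2 with h2 | h2
      · rcases hcases 3 with h3 | h3
        · exact h34 ⟨by rw [h2, elem14_2], by rw [h3, elem14_3]⟩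
        · exact absurd (honep 0 3 h h3) (by decide)
      · exact absurd (honep 0 2 h h2) (by decide)
  · refine ⟨1, ?_⟩
    rcases hcases 1 with h | h
    · rw [h, elem14_1, hi]
    · exfalso
      rcases hcases 2 with h2 | h2
      · rcases hcases 3 with h3 | h3
        · exact h34 ⟨by rw [h2, elem14_2], by rw [h3, elem14_3]⟩
        · exact absurd (honep 1 3 h h3) (by decide)
      · exact absurd (honep 1 2 h h2) (by decide)
  · rcases h23cases with h | h
    · exact ⟨2, by rw [h, hi]⟩
    · exact ⟨3, by rw [h, hi]⟩

lemma forward_main (hpop : (inst14 D c).Popular M) (hperf : HA.Perfect M)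
    (hce : ∀ i, c (he14 i) ≤ 2) (hcp : ∀ j, c (hp14 j) ≤ 3)
    (hcq : ∀ j, c (hq14 j) ≤ 2) (hcx : c hx14 ≤ 2 * n) :
    ∃ J, D.ExactCover J := by
  have hM := hpop.1
  set J : Finset (Fin (3 * n)) := univ.filter fun j => M (aA j) = some (hp14 j) with hJdef
  have hcnt : ∀ i, (J.filter fun j => D.Mem i j).card ≤ 1 := by
    intro i
    by_contra hcon
    rw [not_le] at hcon
    obtain ⟨a, ha, b, hb, hab⟩ := Finset.one_lt_card.mp hcon
    rw [Finset.mem_filter, hJdef, Finset.mem_filter] at ha hb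
    obtain ⟨ℓa, hℓa⟩ := s_at_elements D c M hpop hperf (hcp a) hce ha.1.2 i ha.2
    obtain ⟨ℓb, hℓb⟩ := s_at_elements D c M hpop hperf (hcp b) hce hb.1.2 i hb.2
    exact he_two_s D c M hM hperf (hce i) hℓa hℓb (by simp [Prod.ext_iff, hab])
  have hJcard : n ≤ J.card := by
    have hsub : Jᶜ.image aA ⊆ HA.matchedTo M (hx14 : House14 n) := by
      intro b hb
      obtain ⟨j, hj, rfl⟩ := Finset.mem_image.mp hb
      rw [Finset.mem_compl, hJdef, Finset.mem_filter] at hj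
      rw [mem_matchedTo]
      rcases aA_cases D c M hM hperf (hcq j) with h | h
      · exact absurd h (fun hh => hj ⟨mem_univ _, hh⟩)
      · exact h
    have hinj : (Jᶜ.image (aA : Fin (3 * n) → Appl14 n)).card = Jᶜ.card :=
      Finset.card_image_of_injective _ (fun x y h => by simpa using h)
    have h1 : Jᶜ.card ≤ c hx14 := by
      rw [← hinj]
      exact (Finset.card_le_card hsub).trans (hM.2 _)
    have h2 : Jᶜ.card = 3 * n - J.card := by
      rw [Finset.card_compl, Fintype.card_fin]
    have h3 : J.card ≤ 3 * n := by
      calc J.card ≤ (univ : Finset (Fin (3 * n))).card := Finset.card_le_univ _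
        _ = 3 * n := by rw [Finset.card_univ, Fintype.card_fin]
    omega
  exact ⟨J, exactCover_of_disjoint D hcnt hJcard⟩

end Forward
/-- there is a capacity change vector `r` with `|r|_∞ ≤ 1` such that the
instance with capacities `q + r` admits a perfect popular matching iff the 3DM instance
admits an exact 3-cover. -/
theorem minMax_change_iff_exactCover (n : ℕ) (D : ThreeDMFlat n) :
    (∃ r : House14 n → ℤ, (∀ h, 0 ≤ (cap14 h : ℤ) + r h) ∧ (∀ h, |r h| ≤ 1) ∧
        ∃ M, HA.Perfect M ∧
          (inst14 D fun h => ((cap14 h : ℤ) + r h).toNat).Popular M) ↔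
      (∃ J, D.ExactCover J) := by
  constructor
  · rintro ⟨r, hr0, hr1, M, hperf, hpop⟩
    rcases Nat.eq_zero_or_pos n with hn | hn
    · subst hn
      exact ⟨∅, fun i => absurd i.isLt (by omega)⟩
    · set c : House14 n → ℕ := fun h => ((cap14 h : ℤ) + r h).toNat with hc
      refine forward_main D c M hpop hperf ?_ ?_ ?_ ?_
      · intro i
        have h1 := hr1 (he14 i)
        rw [abs_le] at h1
        have e : c (he14 i) = ((cap14 (he14 i) : ℤ) + r (he14 i)).toNat := rfl
        have e2 : cap14 (he14 i) = 1 := rfl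
        rw [e2] at e
        omega
      · intro j
        have h1 := hr1 (hp14 j)
        rw [abs_le] at h1
        have e : c (hp14 j) = ((cap14 (hp14 j) : ℤ) + r (hp14 j)).toNat := rfl
        have e2 : cap14 (hp14 j) = 2 := rfl
        rw [e2] at e
        omega
      · intro j
        have h1 := hr1 (hq14 j)
        rw [abs_le] at h1
        have e : c (hq14 j) = ((cap14 (hq14 j) : ℤ) + r (hq14 j)).toNat := rfl
        have e2 : cap14 (hq14 j) = 1 := rfl
        rw [e2] at e
        omega
      · have h1 := hr1 (hx14 : House14 n)
        rw [abs_le] at h1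
        have e : c (hx14 : House14 n) =
            ((cap14 (hx14 : House14 n) : ℤ) + r (hx14 : House14 n)).toNat := rfl
        have e2 : cap14 (hx14 : House14 n) = 2 * n - 1 := rfl
        rw [e2] at e
        omega
  · rintro ⟨J, hJ⟩
    refine ⟨rB J, ?_, ?_, MB J D, MB_perfect J D, MB_popular J D hJ⟩
    · intro h
      obtain i | j | j | j | u := h
      · show (0 : ℤ) ≤ ((1 : ℕ) : ℤ) + 1
        norm_num
      · show (0 : ℤ) ≤ ((4 : ℕ) : ℤ) + 0
        norm_num
      · show (0 : ℤ) ≤ ((2 : ℕ) : ℤ) + (if j ∈ J then 1 else -1)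
        split_ifs <;> norm_num
      · show (0 : ℤ) ≤ ((1 : ℕ) : ℤ) + 1
        norm_num
      · show (0 : ℤ) ≤ ((2 * n - 1 : ℕ) : ℤ) + 1
        have := Int.natCast_nonneg (2 * n - 1)
        omega
    · intro h
      obtain i | j | j | j | u := h
      · show |(1 : ℤ)| ≤ 1
        norm_num
      · show |(0 : ℤ)| ≤ 1
        norm_num
      · show |if j ∈ J then (1 : ℤ) else -1| ≤ 1
        split_ifs <;> norm_num
      · show |(1 : ℤ)| ≤ 1
        norm_num
      · show |(1 : ℤ)| ≤ 1
        norm_num
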